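/- Let p be an odd prime, k ≥ 1, and Γ the kernel of the reduction Hol((Z/p^{k+1})^n) → Hol((Z/p)^n), whose elements have the form (1 + pA, px). An element g = (1 + pA, px) of Γ satisfies g^p = 1 if and only if A ≡ p^{k−1}B and x ≡ p^{k−1}y mod p^{k+1} for some B, y, i.e., g lies in the kernel of Γ → Γ' where Γ' is the corresponding kernel at level k. Moreover the subgroup Ω₁(Γ) generated by elements of order dividing p is central in Γ. -/

import Mathlib

open Matrix

def glMulAut (R : Type*) [CommRing R] (n : ℕ) :
    GL (Fin n) R →* MulAut (Multiplicative (Fin n → R)) where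
  toFun M := AddEquiv.toMultiplicative
    { toFun := fun v => (M : Matrix (Fin n) (Fin n) R) *ᵥ v
      invFun := fun v => ((M⁻¹ : GL (Fin n) R) : Matrix (Fin n) (Fin n) R) *ᵥ v
      left_inv := fun v => by
        dsimp only
        rw [Matrix.mulVec_mulVec, ← Matrix.GeneralLinearGroup.coe_mul, inv_mul_cancel,
          Matrix.GeneralLinearGroup.coe_one, Matrix.one_mulVec]
      right_inv := fun v => by
        dsimp only
        rw [Matrix.mulVec_mulVec, ← Matrix.GeneralLinearGroup.coe_mul, mul_inv_cancel,
          Matrix.GeneralLinearGroup.coe_one, Matrix.one_mulVec]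
      map_add' := fun v w => by
        exact Matrix.mulVec_add _ _ _ }
  map_one' := by
    ext v
    simp
  map_mul' M N := by
    ext v
    simp [Matrix.mulVec_mulVec]

abbrev HolV (R : Type*) [CommRing R] (n : ℕ) : Type _ :=
  Multiplicative (Fin n → R) ⋊[glMulAut R n] GL (Fin n) R

/-- The reduction homomorphism `Hol(R^n) → Hol(S^n)` induced by a ring
homomorphism `f : R → S`, acting entrywise on vectors and matrices. -/
def holRed {R S : Type*} [CommRing R] [CommRing S] (f : R →+* S) (n : ℕ) :
    HolV R n →* HolV S n :=
  SemidirectProduct.map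
    (AddMonoidHom.toMultiplicative (f.toAddMonoidHom.compLeft (Fin n)))
    (Matrix.GeneralLinearGroup.map f)
    (by
      intro M
      refine MonoidHom.ext fun v => ?_
      show (fun i => f (((M : Matrix (Fin n) (Fin n) R) *ᵥ (Multiplicative.toAdd v)) i)) =
        ((Matrix.GeneralLinearGroup.map f M : Matrix (Fin n) (Fin n) S) *ᵥ
          fun i => f (Multiplicative.toAdd v i))
      funext i
      rw [RingHom.map_mulVec f]
      congr 1)

open Matrix Finset

lemma aux_one_add_pow {α : Type*} [Ring α] (X : α) (t : ℕ) :
    ∃ V : α, (1 + X) ^ t = 1 + t • X + X ^ 2 * V := by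
  induction t with
  | zero => exact ⟨0, by simp⟩
  | succ t ih =>
    obtain ⟨V, hV⟩ := ih
    refine ⟨t • (1 : α) + V + V * X, ?_⟩
    rw [pow_succ, hV]
    simp only [mul_add, add_mul, one_mul, mul_one, smul_mul_assoc, mul_smul_comm, sq,
      mul_assoc, succ_nsmul]
    abel

lemma aux_geom_sum {α : Type*} [Ring α] (X : α) (t : ℕ) :
    ∃ W : α, ∑ i ∈ Finset.range t, (1 + X) ^ i
      = t • (1 : α) + (t.choose 2) • X + X ^ 2 * W := by
  induction t with
  | zero => exact ⟨0, by simp⟩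
  | succ t ih =>
    obtain ⟨W, hW⟩ := ih
    obtain ⟨V, hV⟩ := aux_one_add_pow X t
    refine ⟨W + V, ?_⟩
    rw [Finset.sum_range_succ, hW, hV, Nat.choose_succ_succ, Nat.choose_one_right]
    simp only [add_nsmul, succ_nsmul, mul_add]
    abel

/-- The geometric sum `∑_{i<p} (1+pA)^i` equals `p • G` with `G` a unit,
provided `p` is odd and `(p:R)^(k+1) = 0`. -/
lemma aux_key_factor {R : Type*} [CommRing R] {m : Type*} [Fintype m] [DecidableEq m]
    {p k : ℕ} (hodd : Odd p) (hpk : (p : R) ^ (k + 1) = 0)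
    (A : Matrix m m R) :
    ∃ G : Matrix m m R, IsUnit G ∧
      ∑ i ∈ Finset.range p, (1 + (p : R) • A) ^ i = (p : R) • G := by
  obtain ⟨W, hW⟩ := aux_geom_sum ((p : R) • A) p
  obtain ⟨t, ht⟩ := hodd
  have hchoose : p.choose 2 = p * t := by
    rw [Nat.choose_two_right, ht, Nat.add_sub_cancel,
      show (2 * t + 1) * (2 * t) = ((2 * t + 1) * t) * 2 by ring, Nat.mul_div_cancel _ two_pos]
  set X : Matrix m m R := (p : R) • A with hX
  refine ⟨1 + (t : R) • X + A * (X * W), ?_, ?_⟩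
  · have hZ : (t : R) • X + A * (X * W) = (p : R) • ((t : R) • A + A * (A * W)) := by
      rw [hX]
      rw [smul_comm, smul_add, smul_mul_assoc, mul_smul_comm]
    rw [add_assoc]
    apply IsNilpotent.isUnit_one_add
    refine ⟨k + 1, ?_⟩
    rw [hZ, smul_pow, hpk, zero_smul]
  · rw [hW, hchoose]
    have h1 : (p : ℕ) • (1 : Matrix m m R) = (p : R) • 1 := by
      rw [Nat.cast_smul_eq_nsmul]
    have h2 : ((p * t : ℕ)) • X = (p : R) • ((t : R) • X) := by
      rw [← Nat.cast_smul_eq_nsmul R, Nat.cast_mul, mul_smul]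
    have h3 : X ^ 2 * W = (p : R) • (A * (X * W)) := by
      rw [sq, mul_assoc, hX, smul_mul_assoc]
    rw [h1, h2, h3, ← smul_add, ← smul_add]

lemma aux_cast_zero_iff {p N : ℕ} [NeZero N] [NeZero p] (h : p ∣ N) (a : ZMod N) :
    ZMod.castHom h (ZMod p) a = 0 ↔ ∃ b : ZMod N, a = (p : ZMod N) * b := by
  constructor
  · intro h0
    rw [ZMod.castHom_apply, ← ZMod.natCast_val, ZMod.natCast_eq_zero_iff] at h0
    obtain ⟨c, hc⟩ := h0
    refine ⟨(c : ZMod N), ?_⟩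
    have ha : ((a.val : ℕ) : ZMod N) = a := by rw [ZMod.natCast_val, ZMod.cast_id]
    rw [← ha, hc]
    push_cast
    ring
  · rintro ⟨b, rfl⟩
    rw [_root_.map_mul, map_natCast, ZMod.natCast_self, zero_mul]

lemma aux_cast_pk_zero_iff {p k : ℕ} [NeZero (p ^ (k + 1))] (hp : 0 < p)
    (a : ZMod (p ^ (k + 1))) :
    ZMod.castHom (pow_dvd_pow p (Nat.le_succ k)) (ZMod (p ^ k)) a = 0 ↔
      (p : ZMod (p ^ (k + 1))) * a = 0 := by
  haveI : NeZero (p ^ k) := ⟨pow_ne_zero k hp.ne'⟩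
  have ha : ((a.val : ℕ) : ZMod (p ^ (k + 1))) = a := by rw [ZMod.natCast_val, ZMod.cast_id]
  rw [ZMod.castHom_apply, ← ZMod.natCast_val, ZMod.natCast_eq_zero_iff]
  conv_rhs => rw [← ha]
  rw [← Nat.cast_mul, ZMod.natCast_eq_zero_iff]
  generalize a.val = m
  rw [pow_succ, mul_comm (p ^ k) p, Nat.mul_dvd_mul_iff_left hp]

section Infra

variable {R S : Type*} [CommRing R] [CommRing S] {n : ℕ}

lemma glMulAut_apply (M : GL (Fin n) R) (w : Multiplicative (Fin n → R)) :
    glMulAut R n M w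
      = Multiplicative.ofAdd ((M : Matrix (Fin n) (Fin n) R) *ᵥ Multiplicative.toAdd w) := rfl

lemma gl_map_coe (f : R →+* S) (M : GL (Fin n) R) :
    ((Matrix.GeneralLinearGroup.map f M : GL (Fin n) S) : Matrix (Fin n) (Fin n) S)
      = ((M : Matrix (Fin n) (Fin n) R)).map f := rfl

lemma holV_pow (g : HolV R n) (t : ℕ) :
    (g ^ t).right = g.right ^ t ∧
      Multiplicative.toAdd (g ^ t).left
        = (∑ i ∈ Finset.range t, ((g.right : Matrix (Fin n) (Fin n) R)) ^ i) *ᵥ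
            Multiplicative.toAdd g.left := by
  induction t with
  | zero =>
    refine ⟨by rw [pow_zero, pow_zero]; rfl, ?_⟩
    rw [pow_zero, Finset.range_zero, Finset.sum_empty, Matrix.zero_mulVec]
    rfl
  | succ t ih =>
    obtain ⟨ihr, ihl⟩ := ih
    constructor
    · rw [pow_succ, SemidirectProduct.mul_right, ihr, pow_succ]
    · rw [pow_succ, SemidirectProduct.mul_left, toAdd_mul, ihl, glMulAut_apply, toAdd_ofAdd,
        ihr, Finset.sum_range_succ, Matrix.add_mulVec, Units.val_pow_eq_pow_val]

lemma holV_eq_one_iff (g : HolV R n) : g = 1 ↔ g.left = 1 ∧ g.right = 1 := by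
  constructor
  · rintro rfl; exact ⟨rfl, rfl⟩
  · rintro ⟨h1, h2⟩; exact SemidirectProduct.ext h1 h2

lemma holRed_eq_one_iff (f : R →+* S) (g : HolV R n) :
    holRed f n g = 1 ↔
      (∀ i j, f (((g.right : Matrix (Fin n) (Fin n) R) - 1) i j) = 0) ∧
        (∀ i, f (Multiplicative.toAdd g.left i) = 0) := by
  have hsub : ((g.right : Matrix (Fin n) (Fin n) R) - 1).map f
      = ((g.right : Matrix (Fin n) (Fin n) R)).map f - 1 := by
    simp only [← RingHom.mapMatrix_apply]
    rw [map_sub, _root_.map_one]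
  have hl : (AddMonoidHom.toMultiplicative (f.toAddMonoidHom.compLeft (Fin n))) g.left
      = Multiplicative.ofAdd (fun i => f (Multiplicative.toAdd g.left i)) := rfl
  rw [holV_eq_one_iff]
  unfold holRed
  rw [SemidirectProduct.map_left, SemidirectProduct.map_right, hl, ofAdd_eq_one, funext_iff,
    Units.ext_iff, gl_map_coe, Units.val_one, ← sub_eq_zero, ← hsub, ← Matrix.ext_iff]
  simp only [Matrix.map_apply, Matrix.zero_apply, Pi.zero_apply]
  exact and_comm

end Infra

section Char

variable {R : Type*} [CommRing R] {n : ℕ}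

lemma unit_mul_cancel {m : Type*} [Fintype m] [DecidableEq m] {G Y : Matrix m m R}
    (hG : IsUnit G) : G * Y = 0 ↔ Y = 0 := by
  obtain ⟨u, hu⟩ := hG
  constructor
  · intro h
    calc Y = (↑u⁻¹ * ↑u) * Y := by rw [u.inv_mul, one_mul]
    _ = ↑u⁻¹ * (G * Y) := by rw [mul_assoc, hu]
    _ = 0 := by rw [h, mul_zero]
  · intro h; rw [h, mul_zero]

lemma unit_mulVec_cancel {m : Type*} [Fintype m] [DecidableEq m] {G : Matrix m m R}
    {w : m → R} (hG : IsUnit G) : G *ᵥ w = 0 ↔ w = 0 := by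
  obtain ⟨u, hu⟩ := hG
  constructor
  · intro h
    calc w = (↑u⁻¹ * ↑u) *ᵥ w := by rw [u.inv_mul, Matrix.one_mulVec]
    _ = ↑u⁻¹ *ᵥ (G *ᵥ w) := by rw [← Matrix.mulVec_mulVec, hu]
    _ = 0 := by rw [h, Matrix.mulVec_zero]
  · intro h; rw [h, Matrix.mulVec_zero]

/-- Characterization of the elements of order dividing `p` in `Γ`. -/
lemma pow_p_char {p k : ℕ} (hodd : Odd p) (hpk : (p : R) ^ (k + 1) = 0)
    (g : HolV R n) (A : Matrix (Fin n) (Fin n) R)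
    (hA : (g.right : Matrix (Fin n) (Fin n) R) - 1 = (p : R) • A) :
    g ^ p = 1 ↔ (p : R) • ((g.right : Matrix (Fin n) (Fin n) R) - 1) = 0 ∧
      (p : R) • Multiplicative.toAdd g.left = 0 := by
  have hB1 : (g.right : Matrix (Fin n) (Fin n) R) = 1 + (p : R) • A := by rw [← hA]; abel
  obtain ⟨G, hG, hSum⟩ := aux_key_factor hodd hpk A
  have hS : ∑ i ∈ Finset.range p, (g.right : Matrix (Fin n) (Fin n) R) ^ i = (p : R) • G := by
    rw [hB1]; exact hSum
  obtain ⟨hr, hl⟩ := holV_pow g p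
  have e1 : g.right ^ p = 1 ↔
      (p : R) • ((g.right : Matrix (Fin n) (Fin n) R) - 1) = 0 := by
    rw [Units.ext_iff, Units.val_pow_eq_pow_val, Units.val_one, ← sub_eq_zero,
      ← geom_sum_mul, hS, smul_mul_assoc, ← mul_smul_comm, unit_mul_cancel hG]
  rw [holV_eq_one_iff, ← toAdd_eq_zero, hl, hr, hS, e1, Matrix.smul_mulVec,
    ← Matrix.mulVec_smul, unit_mulVec_cancel hG]
  exact and_comm

end Char

section Comm

variable {R : Type*} [CommRing R] {n : ℕ}

lemma central_comm {p : ℕ} (g h : HolV R n)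
    (hgM : (p : R) • ((g.right : Matrix (Fin n) (Fin n) R) - 1) = 0)
    (hgv : (p : R) • Multiplicative.toAdd g.left = 0)
    (C : Matrix (Fin n) (Fin n) R)
    (hC : (h.right : Matrix (Fin n) (Fin n) R) - 1 = (p : R) • C)
    (z : Fin n → R) (hz : Multiplicative.toAdd h.left = (p : R) • z) :
    g * h = h * g := by
  set D : Matrix (Fin n) (Fin n) R := (g.right : Matrix (Fin n) (Fin n) R) - 1 with hD
  have hBg : (g.right : Matrix (Fin n) (Fin n) R) = 1 + D := by rw [hD]; abel
  have hBh : (h.right : Matrix (Fin n) (Fin n) R) = 1 + (p : R) • C := by rw [← hC]; abel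
  have hDC : D * ((p : R) • C) = 0 := by
    rw [mul_smul_comm, ← smul_mul_assoc, hgM, zero_mul]
  have hCD : ((p : R) • C) * D = 0 := by
    rw [smul_mul_assoc, ← mul_smul_comm, hgM, mul_zero]
  have hDz : D *ᵥ Multiplicative.toAdd h.left = 0 := by
    rw [hz, Matrix.mulVec_smul, ← Matrix.smul_mulVec, hgM, Matrix.zero_mulVec]
  have hCv : ((p : R) • C) *ᵥ Multiplicative.toAdd g.left = 0 := by
    rw [Matrix.smul_mulVec, ← Matrix.mulVec_smul, hgv, Matrix.mulVec_zero]
  apply SemidirectProduct.ext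
  · -- left components
    apply Multiplicative.toAdd.injective
    rw [SemidirectProduct.mul_left, SemidirectProduct.mul_left, toAdd_mul, toAdd_mul,
      glMulAut_apply, glMulAut_apply, toAdd_ofAdd, toAdd_ofAdd, hBg, hBh,
      Matrix.add_mulVec, Matrix.add_mulVec, Matrix.one_mulVec, Matrix.one_mulVec, hDz, hCv]
    abel
  · -- right components
    apply Units.ext
    show ((g.right * h.right : GL (Fin n) R) : Matrix (Fin n) (Fin n) R)
      = ((h.right * g.right : GL (Fin n) R) : Matrix (Fin n) (Fin n) R)
    rw [Units.val_mul, Units.val_mul, hBg, hBh]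
    simp only [mul_add, add_mul, mul_one, one_mul]
    rw [hDC, hCD]
    abel

end Comm
/-- Let `p` be an odd prime, `k ≥ 1`, and `Γ` the kernel of the reduction
`Hol((ℤ/p^(k+1))^n) → Hol((ℤ/p)^n)`.  An element `g` of `Γ` satisfies `g^p = 1`
if and only if `g` lies in the kernel of the reduction
`Hol((ℤ/p^(k+1))^n) → Hol((ℤ/p^k)^n)` (i.e. `g` has the form `(1 + p^k B, p^k y)`).
Moreover the subgroup `Ω₁(Γ)` generated by the elements of order dividing `p`
is central in `Γ`. -/

theorem pow_p_eq_one_iff_and_omega_central (p k n : ℕ) (hp : p.Prime)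
    (hodd : Odd p) (hk : 1 ≤ k) :
    (∀ g ∈ (holRed (ZMod.castHom (dvd_pow_self p (Nat.succ_ne_zero k)) (ZMod p)) n).ker,
        g ^ p = 1 ↔
          holRed (ZMod.castHom (pow_dvd_pow p (Nat.le_succ k)) (ZMod (p ^ k))) n g = 1) ∧
    Subgroup.closure
        {g : ((holRed (ZMod.castHom (dvd_pow_self p (Nat.succ_ne_zero k)) (ZMod p)) n).ker :
            Subgroup (HolV (ZMod (p ^ (k + 1))) n)) | g ^ p = 1} ≤
      Subgroup.center
        ((holRed (ZMod.castHom (dvd_pow_self p (Nat.succ_ne_zero k)) (ZMod p)) n).ker :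
          Subgroup (HolV (ZMod (p ^ (k + 1))) n)) := by
  haveI : NeZero p := ⟨hp.ne_zero⟩
  haveI : NeZero (p ^ (k + 1)) := ⟨pow_ne_zero _ hp.ne_zero⟩
  have hpk : ((p : ℕ) : ZMod (p ^ (k + 1))) ^ (k + 1) = 0 := by
    rw [← Nat.cast_pow, ZMod.natCast_self]
  -- decompositions coming from membership in Γ
  have hmem : ∀ g : HolV (ZMod (p ^ (k + 1))) n,
      g ∈ (holRed (ZMod.castHom (dvd_pow_self p (Nat.succ_ne_zero k)) (ZMod p)) n).ker →
      (∃ A : Matrix (Fin n) (Fin n) (ZMod (p ^ (k + 1))),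
          (g.right : Matrix (Fin n) (Fin n) (ZMod (p ^ (k + 1)))) - 1 = (p : ZMod (p ^ (k + 1))) • A) ∧
        (∃ z : Fin n → ZMod (p ^ (k + 1)), Multiplicative.toAdd g.left = (p : ZMod (p ^ (k + 1))) • z) := by
    intro g hg
    rw [MonoidHom.mem_ker, holRed_eq_one_iff] at hg
    obtain ⟨h1, h2⟩ := hg
    constructor
    · have hc : ∀ i j, ∃ b,
          ((g.right : Matrix (Fin n) (Fin n) (ZMod (p ^ (k + 1)))) - 1) i j = (p : ZMod (p ^ (k + 1))) * b :=
        fun i j => (aux_cast_zero_iff _ _).mp (h1 i j)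
      refine ⟨fun i j => (hc i j).choose, ?_⟩
      ext i j
      change _ = (p : ZMod (p ^ (k + 1))) * (hc i j).choose
      exact (hc i j).choose_spec
    · have hc : ∀ i, ∃ b, Multiplicative.toAdd g.left i = (p : ZMod (p ^ (k + 1))) * b :=
        fun i => (aux_cast_zero_iff _ _).mp (h2 i)
      refine ⟨fun i => (hc i).choose, ?_⟩
      funext i
      rw [Pi.smul_apply, smul_eq_mul]
      exact (hc i).choose_spec
  have hmat : ∀ Y : Matrix (Fin n) (Fin n) (ZMod (p ^ (k + 1))),
      ((p : ZMod (p ^ (k + 1))) • Y = 0 ↔ ∀ i j, (p : ZMod (p ^ (k + 1))) * Y i j = 0) := by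
    intro Y
    constructor
    · intro hY i j
      have : ((p : ZMod (p ^ (k + 1))) • Y) i j = (0 : Matrix (Fin n) (Fin n) (ZMod (p ^ (k + 1)))) i j := by rw [hY]
      simpa using this
    · intro hY
      ext i j
      simpa using hY i j
  have hvec : ∀ w : Fin n → ZMod (p ^ (k + 1)), ((p : ZMod (p ^ (k + 1))) • w = 0 ↔ ∀ i, (p : ZMod (p ^ (k + 1))) * w i = 0) := by
    intro w
    constructor
    · intro hw i
      have : ((p : ZMod (p ^ (k + 1))) • w) i = (0 : Fin n → ZMod (p ^ (k + 1))) i := by rw [hw]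
      simpa using this
    · intro hw
      funext i
      simpa using hw i
  constructor
  · -- part 1
    intro g hg
    obtain ⟨⟨A, hA⟩, -⟩ := hmem g hg
    rw [pow_p_char hodd hpk g A hA, holRed_eq_one_iff]
    constructor
    · rintro ⟨h1, h2⟩
      exact ⟨fun i j => (aux_cast_pk_zero_iff hp.pos _).mpr ((hmat _).mp h1 i j),
        fun i => (aux_cast_pk_zero_iff hp.pos _).mpr ((hvec _).mp h2 i)⟩
    · rintro ⟨h1, h2⟩
      exact ⟨(hmat _).mpr fun i j => (aux_cast_pk_zero_iff hp.pos _).mp (h1 i j),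
        (hvec _).mpr fun i => (aux_cast_pk_zero_iff hp.pos _).mp (h2 i)⟩
  · -- part 2 : Ω₁(Γ) is central in Γ
    rw [Subgroup.closure_le]
    rintro ⟨g, hgmem⟩ hgset
    have hg1 : g ^ p = 1 := by
      have h' : (⟨g, hgmem⟩ : ((holRed (ZMod.castHom (dvd_pow_self p (Nat.succ_ne_zero k))
          (ZMod p)) n).ker : Subgroup (HolV (ZMod (p ^ (k + 1))) n))) ^ p = 1 := hgset
      simpa using congrArg Subtype.val h'
    rw [SetLike.mem_coe, Subgroup.mem_center_iff]
    rintro ⟨h, hhmem⟩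
    apply Subtype.ext
    show h * g = g * h
    obtain ⟨⟨A, hA⟩, -⟩ := hmem g hgmem
    obtain ⟨hgM, hgv⟩ := (pow_p_char hodd hpk g A hA).mp hg1
    obtain ⟨⟨C, hC⟩, z, hz⟩ := hmem h hhmem
    exact (central_comm g h hgM hgv C hC z hz).symm
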